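/- Let m ≥ 2 be an integer, n = (3^m − 1)/2, and t = (n − 1)/3 = (3^{m−1} − 1)/2. Then the number of perfect codes in F_3^n is at least (3 · 2^t)^{3^{t−m+1}}. -/

import Mathlib

open Finset Function

/-- A perfect 1-error-correcting code: every word of the ambient space is within
Hamming distance 1 of exactly one codeword. -/
def IsPerfectCode {ι α : Type*} [Fintype ι] [DecidableEq α] (C : Set (ι → α)) : Prop :=
  ∀ x : ι → α, ∃! c, c ∈ C ∧ hammingDist x c ≤ 1

set_option linter.unusedSectionVars false

variable {ι κ α : Type*} [Fintype ι] [Fintype κ] [DecidableEq α]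

lemma hd_comp_equiv (e : κ ≃ ι) (x y : ι → α) :
    hammingDist (x ∘ e) (y ∘ e) = hammingDist x y := by
  unfold hammingDist
  apply Finset.card_bij' (fun i _ => e i) (fun i _ => e.symm i) <;> simp

lemma hd_sumElim (a a' : ι → α) (b b' : κ → α) :
    hammingDist (Sum.elim a b) (Sum.elim a' b') = hammingDist a a' + hammingDist b b' := by
  unfold hammingDist
  rw [← Finset.card_toLeft_add_card_toRight]
  congr 1 <;> · congr 1; ext i; simp

lemma hd_const (s s' : α) :
    hammingDist (fun _ : Fin 1 => s) (fun _ : Fin 1 => s') = if s = s' then 0 else 1 := by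
  unfold hammingDist
  split <;> rename_i h <;> simp [h, Finset.filter_eq_empty_iff, Finset.filter_true_of_mem,
    Finset.card_univ]

section group
variable [DecidableEq ι] [AddCommGroup α]

lemma hn_add_le (a b : ι → α) : hammingNorm (a + b) ≤ hammingNorm a + hammingNorm b := by
  rw [← hammingDist_zero_right, ← hammingDist_zero_right, ← hammingDist_zero_right]
  calc hammingDist (a+b) 0 ≤ hammingDist (a+b) b + hammingDist b 0 := hammingDist_triangle _ _ _
  _ = hammingDist a 0 + hammingDist b 0 := by
      rw [hammingDist_eq_hammingNorm, hammingDist_eq_hammingNorm a 0]; simp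

lemma hd_add_right (a b c : ι → α) : hammingDist (a + c) (b + c) = hammingDist a b := by
  rw [hammingDist_eq_hammingNorm, hammingDist_eq_hammingNorm a b]; congr 1; abel

set_option linter.unusedSectionVars false

lemma hn_neg (a : ι → α) : hammingNorm (-a) = hammingNorm a := by
  unfold hammingNorm; congr 1; ext i; simp

lemma hd_self_add (a s : ι → α) : hammingDist a (a + s) = hammingNorm s := by
  rw [hammingDist_eq_hammingNorm, show -a + (a + s) = s by abel]

lemma hn_single (i : ι) {δ : α} (hδ : δ ≠ 0) : hammingNorm (Pi.single i δ : ι → α) = 1 := by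
  unfold hammingNorm
  rw [Finset.card_eq_one]
  exact ⟨i, by ext j; by_cases h : j = i <;> simp [Pi.single_apply, h, hδ]⟩

lemma hd_eq_one {y y' : ι → α} (h : hammingDist y y' = 1) :
    ∃ i δ, δ ≠ 0 ∧ y' = y + Pi.single i δ := by
  rw [hammingDist, Finset.card_eq_one] at h
  obtain ⟨i, hi⟩ := h
  refine ⟨i, y' i - y i, ?_, ?_⟩
  · have : i ∈ ({j | y j ≠ y' j} : Finset ι) := hi ▸ Finset.mem_singleton_self i
    simp only [Finset.mem_filter] at this
    simp only [sub_ne_zero]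
    intro hc; exact this.2 hc.symm
  · funext j
    by_cases hj : j = i
    · subst hj; simp
    · have : j ∉ ({k | y k ≠ y' k} : Finset ι) := by rw [hi]; simp [hj]
      simp only [Finset.mem_filter, Finset.mem_univ, true_and, not_not] at this
      simp [Pi.single_apply, hj, ← this]

end group

/-! ### The ternary Vasil'ev construction -/

abbrev F3 := ZMod 3

def sig {t : ℕ} (l y : Fin t → F3) : F3 := ∑ i, l i * y i

lemma sig_add {t : ℕ} (l y z : Fin t → F3) : sig l (y + z) = sig l y + sig l z := by
  simp [sig, mul_add, Finset.sum_add_distrib]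

lemma sig_single {t : ℕ} (l : Fin t → F3) (i : Fin t) (δ : F3) :
    sig l (Pi.single i δ) = l i * δ := by
  rw [sig, Finset.sum_eq_single i] <;> simp +contextual [Pi.single_apply]

lemma sig_zero {t : ℕ} (l : Fin t → F3) : sig l 0 = 0 := by simp [sig]

/-- index type for words of length `3t+1` split into three blocks and a final symbol -/
abbrev Idx (t : ℕ) := Fin t ⊕ (Fin t ⊕ (Fin t ⊕ Fin 1))

variable {t : ℕ}

/-- last coordinate of a Vasil'ev codeword -/
def lastc (f : (Fin t → F3) → F3) (l : (Fin t → F3) → (Fin t → F3))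
    (y z c : Fin t → F3) : F3 := sig (l c) y - sig (l c) z + f c

/-- a Vasil'ev codeword -/
def wrd (f : (Fin t → F3) → F3) (l : (Fin t → F3) → (Fin t → F3))
    (y z c : Fin t → F3) : Idx t → F3 :=
  Sum.elim y (Sum.elim z (Sum.elim (y + z + c) (fun _ => lastc f l y z c)))

/-- the Vasil'ev code -/
def vas (C : Set (Fin t → F3)) (f : (Fin t → F3) → F3)
    (l : (Fin t → F3) → (Fin t → F3)) : Set (Idx t → F3) :=
  {w | ∃ y z c, c ∈ C ∧ w = wrd f l y z c}

lemma hd_wrd (f l) (y z c y' z' c' : Fin t → F3) :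
    hammingDist (wrd f l y z c) (wrd f l y' z' c') =
      hammingDist y y' + (hammingDist z z' + (hammingDist (y + z + c) (y' + z' + c') +
        if lastc f l y z c = lastc f l y' z' c' then 0 else 1)) := by
  rw [wrd, wrd, hd_sumElim, hd_sumElim, hd_sumElim, hd_const]

lemma hd_any (x : Idx t → F3) (f l) (y z c : Fin t → F3) :
    hammingDist x (wrd f l y z c) =
      hammingDist (x ∘ Sum.inl) y + (hammingDist (x ∘ Sum.inr ∘ Sum.inl) z +
        (hammingDist (x ∘ Sum.inr ∘ Sum.inr ∘ Sum.inl) (y + z + c) +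
        if x (Sum.inr (Sum.inr (Sum.inr 0))) = lastc f l y z c then 0 else 1)) := by
  have hx : x = Sum.elim (x ∘ Sum.inl) (Sum.elim (x ∘ Sum.inr ∘ Sum.inl)
      (Sum.elim (x ∘ Sum.inr ∘ Sum.inr ∘ Sum.inl)
        (fun _ => x (Sum.inr (Sum.inr (Sum.inr 0)))))) := by
    funext i
    rcases i with i | i | i | i <;> [simp; simp; simp; simp [Fin.eq_zero i]]
  conv_lhs => rw [hx]
  rw [wrd, hd_sumElim, hd_sumElim, hd_sumElim, hd_const]

/-- minimum distance at least 3 -/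
def MD3 {ι α : Type*} [Fintype ι] [DecidableEq α] (C : Set (ι → α)) : Prop :=
  ∀ c ∈ C, ∀ c' ∈ C, c ≠ c' → 3 ≤ hammingDist c c'

lemma vas_md3 {C : Set (Fin t → F3)} (hC : MD3 C) {f : (Fin t → F3) → F3}
    {l : (Fin t → F3) → (Fin t → F3)} (hl : ∀ c i, l c i ≠ 0) :
    MD3 (vas C f l) := by
  rintro _ ⟨y, z, c, hc, rfl⟩ _ ⟨y', z', c', hc', rfl⟩ hne
  rw [hd_wrd]
  by_cases hcc : c = c'
  · subst hcc
    by_cases h1 : y = y' <;> by_cases h2 : z = z'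
    · exact absurd (by rw [h1, h2]) hne
    · -- y = y', z ≠ z'
      subst h1
      have hd3 : hammingDist (y + z + c) (y + z' + c) = hammingDist z z' := by
        rw [show y + z + c = z + (y + c) by ring, show y + z' + c = z' + (y + c) by ring,
          hd_add_right]
      rcases Nat.lt_or_ge (hammingDist z z') 2 with h | h
      · have hz1 : hammingDist z z' = 1 := by
          have := hammingDist_pos.2 h2; omega
        obtain ⟨i, δ, hδ, rfl⟩ := hd_eq_one hz1
        have hAA : ¬ (lastc f l y z c = lastc f l y (z + Pi.single i δ) c) := by
          simp only [lastc, sig_add, sig_single]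
          intro h
          have h0 : l c i * δ = 0 := by linear_combination h
          exact hδ ((mul_eq_zero.1 h0).resolve_left (hl c i))
        rw [if_neg hAA, hd3]
        omega
      · rw [hd3]; split <;> omega
    · -- y ≠ y', z = z'
      subst h2
      have hd3 : hammingDist (y + z + c) (y' + z + c) = hammingDist y y' := by
        rw [show y + z + c = y + (z + c) by ring, show y' + z + c = y' + (z + c) by ring,
          hd_add_right]
      rcases Nat.lt_or_ge (hammingDist y y') 2 with h | h
      · have hy1 : hammingDist y y' = 1 := by
          have := hammingDist_pos.2 h1; omega
        obtain ⟨i, δ, hδ, rfl⟩ := hd_eq_one hy1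
        have hAA : ¬ (lastc f l y z c = lastc f l (y + Pi.single i δ) z c) := by
          simp only [lastc, sig_add, sig_single]
          intro h
          have h0 : l c i * δ = 0 := by linear_combination -h
          exact hδ ((mul_eq_zero.1 h0).resolve_left (hl c i))
        rw [if_neg hAA, hd3]
        omega
      · rw [hd3]; split <;> omega
    · -- y ≠ y', z ≠ z'
      have hy := hammingDist_pos.2 h1
      have hz := hammingDist_pos.2 h2
      rcases Nat.lt_or_ge (hammingDist y y' + hammingDist z z') 3 with h | h
      · have hy1 : hammingDist y y' = 1 := by omega
        have hz1 : hammingDist z z' = 1 := by omega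
        obtain ⟨i, δ₁, hδ₁, rfl⟩ := hd_eq_one hy1
        obtain ⟨j, δ₂, hδ₂, rfl⟩ := hd_eq_one hz1
        by_cases hu : (Pi.single i δ₁ + Pi.single j δ₂ : Fin t → F3) = 0
        · -- i = j, δ₂ = -δ₁
          have hij : i = j := by
            by_contra hij
            have := congrFun hu i
            simp [Pi.single_apply, hij, hδ₁] at this
          subst hij
          have hδ : δ₂ = -δ₁ := by
            have := congrFun hu i
            simp [Pi.single_apply] at this
            linear_combination this
          subst hδ
          have hAA : ¬ (lastc f l y z c =
              lastc f l (y + Pi.single i δ₁) (z + Pi.single i (-δ₁)) c) := by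
            simp only [lastc, sig_add, sig_single]
            intro h
            have h0 : l c i * δ₁ = 0 := by
              have h3 : (3 : F3) = 0 := rfl
              linear_combination h + l c i * δ₁ * h3
            exact hδ₁ ((mul_eq_zero.1 h0).resolve_left (hl c i))
          have hd3 : hammingDist (y + z + c)
              ((y + Pi.single i δ₁) + (z + Pi.single i (-δ₁)) + c) = 0 := by
            rw [show (y + Pi.single i δ₁) + (z + Pi.single i (-δ₁)) + c
              = (y + z + c) + (Pi.single i δ₁ + Pi.single i (-δ₁)) by ring, hu, add_zero,
              hammingDist_self]
          rw [if_neg hAA, hd3]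
          omega
        · have hd3 : 1 ≤ hammingDist (y + z + c)
              ((y + Pi.single i δ₁) + (z + Pi.single j δ₂) + c) := by
            rw [show (y + Pi.single i δ₁) + (z + Pi.single j δ₂) + c
                = (y + z + c) + (Pi.single i δ₁ + Pi.single j δ₂) by ring, hd_self_add]
            exact hammingNorm_pos_iff.2 hu
          split <;> omega
      · split <;> omega
  · have h3 : 3 ≤ hammingDist c c' := hC c hc c' hc' hcc
    have t1 : hammingDist c (c + ((y - y') + (z - z'))) ≤
        hammingDist y y' + hammingDist z z' := by
      rw [hd_self_add]
      calc hammingNorm ((y - y') + (z - z'))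
          ≤ hammingNorm (y - y') + hammingNorm (z - z') := hn_add_le _ _
        _ = _ := by
          rw [hammingDist_eq_hammingNorm, hammingDist_eq_hammingNorm, ← hn_neg (-y + y'),
            ← hn_neg (-z + z'), show -(-y + y') = y - y' by abel, show -(-z + z') = z - z' by abel]
    have t2 : hammingDist (c + ((y - y') + (z - z'))) c' =
        hammingDist (y + z + c) (y' + z' + c') := by
      rw [← hd_add_right (c + ((y - y') + (z - z'))) c' (y' + z')]
      congr 1 <;> ring
    have tri := hammingDist_triangle c (c + ((y - y') + (z - z'))) c'
    split <;> omega

lemma single_neg (i : Fin t) (δ : F3) : (Pi.single i (-δ) : Fin t → F3) = -Pi.single i δ := by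
  funext j; by_cases h : j = i <;> simp [Pi.single_apply, h]

lemma hd_elim (u v w : Fin t → F3) (s : F3) (f l) (y z c : Fin t → F3) :
    hammingDist (Sum.elim u (Sum.elim v (Sum.elim w fun _ => s)) : Idx t → F3)
      (wrd f l y z c) =
      hammingDist u y + (hammingDist v z + (hammingDist w (y + z + c) +
        if s = lastc f l y z c then 0 else 1)) := by
  rw [wrd, hd_sumElim, hd_sumElim, hd_sumElim, hd_const]

lemma vas_cover {C : Set (Fin t → F3)} (hC : IsPerfectCode C) (f : (Fin t → F3) → F3)
    {l : (Fin t → F3) → (Fin t → F3)} (hl : ∀ c i, l c i ≠ 0)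
    (u v w : Fin t → F3) (s : F3) :
    ∃ cw ∈ vas C f l,
      hammingDist (Sum.elim u (Sum.elim v (Sum.elim w fun _ => s)) : Idx t → F3) cw ≤ 1 := by
  obtain ⟨c, ⟨hc, hdc⟩, -⟩ := hC (w - u - v)
  rcases Nat.lt_or_ge (hammingDist (w - u - v) c) 1 with h | h
  · have hc0 : w - u - v = c := hammingDist_eq_zero.1 (by omega)
    refine ⟨wrd f l u v c, ⟨u, v, c, hc, rfl⟩, ?_⟩
    rw [hd_elim, hammingDist_self, hammingDist_self,
      show u + v + c = w by rw [← hc0]; ring, hammingDist_self]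
    split <;> omega
  · have h1 : hammingDist (w - u - v) c = 1 := by omega
    obtain ⟨i, δ, hδ, he⟩ := hd_eq_one h1
    -- `he : c = (w - u - v) + Pi.single i δ`, so `u + v + c = w + Pi.single i δ`.
    have hw : u + v + c = w + Pi.single i δ := by rw [he]; ring
    have hkey : ∀ a d : F3, d ≠ 0 → a = 0 ∨ a = d ∨ a = -d := by decide
    have hld : l c i * δ ≠ 0 := mul_ne_zero (hl c i) hδ
    rcases hkey (s - lastc f l u v c) (l c i * δ) hld with h0 | h0 | h0
    · -- s = A : modify the third block
      refine ⟨wrd f l u v c, ⟨u, v, c, hc, rfl⟩, ?_⟩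
      rw [hd_elim, hammingDist_self, hammingDist_self,
        if_pos (show s = lastc f l u v c by linear_combination h0)]
      have h3 : hammingDist w (u + v + c) = 1 := by
        rw [hw, hd_self_add, hn_single _ hδ]
      omega
    · -- s = A + lcᵢδ : modify the second block
      refine ⟨wrd f l u (v + Pi.single i (-δ)) c, ⟨u, _, c, hc, rfl⟩, ?_⟩
      rw [hd_elim, hammingDist_self]
      have h2 : hammingDist v (v + Pi.single i (-δ)) = 1 := by
        rw [hd_self_add, hn_single _ (neg_ne_zero.2 hδ)]
      have h3 : u + (v + Pi.single i (-δ)) + c = w := by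
        rw [single_neg, show u + (v + -Pi.single i δ) + c = (u + v + c) - Pi.single i δ by ring,
          hw]; ring
      rw [h3, hammingDist_self, if_pos (show s = lastc f l u (v + Pi.single i (-δ)) c by
        simp only [lastc, sig_add, sig_single] at h0 ⊢; linear_combination h0)]
      omega
    · -- s = A - lcᵢδ : modify the first block
      refine ⟨wrd f l (u + Pi.single i (-δ)) v c, ⟨_, v, c, hc, rfl⟩, ?_⟩
      rw [hd_elim]
      have h2 : hammingDist u (u + Pi.single i (-δ)) = 1 := by
        rw [hd_self_add, hn_single _ (neg_ne_zero.2 hδ)]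
      have h3 : (u + Pi.single i (-δ)) + v + c = w := by
        rw [single_neg, show u + -Pi.single i δ + v + c = (u + v + c) - Pi.single i δ by ring,
          hw]; ring
      rw [h3, hammingDist_self, hammingDist_self, if_pos (show s =
          lastc f l (u + Pi.single i (-δ)) v c by
        simp only [lastc, sig_add, sig_single] at h0 ⊢; linear_combination h0)]
      omega

lemma perfect_of_cover_md3 {ι α : Type*} [Fintype ι] [DecidableEq α] {C : Set (ι → α)}
    (hmd : MD3 C) (hcov : ∀ x, ∃ c ∈ C, hammingDist x c ≤ 1) : IsPerfectCode C := by
  intro x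
  obtain ⟨c, hc, hd⟩ := hcov x
  refine ⟨c, ⟨hc, hd⟩, ?_⟩
  rintro c' ⟨hc', hd'⟩
  by_contra hne
  have h3 := hmd c' hc' c hc hne
  have tri := hammingDist_triangle c' x c
  have hcm : hammingDist c' x = hammingDist x c' := hammingDist_comm _ _
  omega

lemma decomp (x : Idx t → F3) : x = Sum.elim (x ∘ Sum.inl) (Sum.elim (x ∘ Sum.inr ∘ Sum.inl)
    (Sum.elim (x ∘ Sum.inr ∘ Sum.inr ∘ Sum.inl)
      (fun _ => x (Sum.inr (Sum.inr (Sum.inr 0)))))) := by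
  funext i
  rcases i with i | i | i | i <;> [simp; simp; simp; simp [Fin.eq_zero i]]

lemma vas_perfect {C : Set (Fin t → F3)} (hC : IsPerfectCode C) (hmd : MD3 C)
    (f : (Fin t → F3) → F3) {l : (Fin t → F3) → (Fin t → F3)} (hl : ∀ c i, l c i ≠ 0) :
    IsPerfectCode (vas C f l) := by
  refine perfect_of_cover_md3 (vas_md3 hmd hl) fun x => ?_
  rw [decomp x]
  exact vas_cover hC f hl _ _ _ _

lemma md3_comp {ι κ α : Type*} [Fintype ι] [Fintype κ] [DecidableEq α] (e : κ ≃ ι)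
    {C : Set (ι → α)} (hC : MD3 C) : MD3 ((fun x => x ∘ e) '' C) := by
  rintro _ ⟨c, hc, rfl⟩ _ ⟨c', hc', rfl⟩ hne
  rw [hd_comp_equiv]
  exact hC c hc c' hc' (fun h => hne (by rw [h]))

lemma comp_inj {ι κ α : Type*} (e : κ ≃ ι) :
    Function.Injective (fun x : ι → α => x ∘ e) := fun a b h =>
  funext fun i => by simpa using congrFun h (e.symm i)

lemma perfect_comp {ι κ α : Type*} [Fintype ι] [Fintype κ] [DecidableEq α] (e : κ ≃ ι)
    {C : Set (ι → α)} (hC : IsPerfectCode C) :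
    IsPerfectCode ((fun x => x ∘ e) '' C) := by
  intro x
  obtain ⟨c, ⟨hc, hd⟩, hu⟩ := hC (x ∘ e.symm)
  have hx : x = (x ∘ e.symm) ∘ e := by funext i; simp
  refine ⟨c ∘ e, ⟨⟨c, hc, rfl⟩, by rw [hx, hd_comp_equiv]; exact hd⟩, ?_⟩
  rintro _ ⟨⟨c', hc', rfl⟩, hd'⟩
  rw [hx, hd_comp_equiv] at hd'
  rw [hu c' ⟨hc', hd'⟩]

lemma wrd_eq {f f' : (Fin t → F3) → F3} {l l' : (Fin t → F3) → (Fin t → F3)}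
    {y z c y' z' c' : Fin t → F3} (h : wrd f l y z c = wrd f' l' y' z' c') :
    y = y' ∧ z = z' ∧ c = c' ∧ lastc f l y z c = lastc f' l' y' z' c' := by
  have h1 : y = y' := funext fun i => congrFun h (Sum.inl i)
  have h2 : z = z' := funext fun i => congrFun h (Sum.inr (Sum.inl i))
  have h3 : y + z + c = y' + z' + c' := funext fun i => congrFun h (Sum.inr (Sum.inr (Sum.inl i)))
  have h4 := congrFun h (Sum.inr (Sum.inr (Sum.inr 0)))
  subst h1; subst h2
  have h3' : c = c' := by
    funext i
    have := congrFun h3 i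
    simpa using this
  exact ⟨rfl, rfl, h3', h4⟩

lemma vas_params_inj {C : Set (Fin t → F3)} {f f' : (Fin t → F3) → F3}
    {l l' : (Fin t → F3) → (Fin t → F3)}
    (h : vas C f l = vas C f' l') {c : Fin t → F3} (hc : c ∈ C) :
    f c = f' c ∧ ∀ i, l c i = l' c i := by
  have hmem : wrd f l 0 0 c ∈ vas C f' l' := h ▸ ⟨0, 0, c, hc, rfl⟩
  obtain ⟨y, z, c'', -, he⟩ := hmem
  obtain ⟨h1, h2, h3, h4⟩ := wrd_eq he
  rw [← h1, ← h2, ← h3] at h4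
  simp only [lastc, sig_zero] at h4
  have hf : f c = f' c := by linear_combination h4
  refine ⟨hf, fun i => ?_⟩
  have hmem2 : wrd f l (Pi.single i 1) 0 c ∈ vas C f' l' := h ▸ ⟨Pi.single i 1, 0, c, hc, rfl⟩
  obtain ⟨y, z, c'', -, he2⟩ := hmem2
  obtain ⟨g1, g2, g3, g4⟩ := wrd_eq he2
  rw [← g1, ← g2, ← g3] at g4
  simp only [lastc, sig_zero, sig_single, mul_one] at g4
  linear_combination g4 - hf

lemma vas_card {C : Set (Fin t → F3)} (f : (Fin t → F3) → F3)
    (l : (Fin t → F3) → (Fin t → F3)) :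
    Nat.card (vas C f l) = 3 ^ t * 3 ^ t * Nat.card C := by
  have : vas C f l = Set.range (fun p : (Fin t → F3) × (Fin t → F3) × C =>
      wrd f l p.1 p.2.1 p.2.2) := by
    ext w
    constructor
    · rintro ⟨y, z, c, hc, rfl⟩; exact ⟨⟨y, z, ⟨c, hc⟩⟩, rfl⟩
    · rintro ⟨⟨y, z, c⟩, rfl⟩; exact ⟨y, z, c, c.2, rfl⟩
  rw [this, Nat.card_range_of_injective, Nat.card_prod, Nat.card_prod]
  · simp [Nat.card_eq_fintype_card, mul_assoc]
  · rintro ⟨y, z, c⟩ ⟨y', z', c'⟩ h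
    obtain ⟨h1, h2, h3, -⟩ := wrd_eq h
    simp only [Prod.mk.injEq]
    exact ⟨h1, h2, Subtype.ext h3⟩

lemma base_perfect : IsPerfectCode ({0} : Set (Fin 1 → F3)) := by
  intro x
  refine ⟨0, ⟨rfl, le_trans hammingDist_le_card_fintype (by simp)⟩, ?_⟩
  rintro c ⟨hc, -⟩
  exact hc

lemma base_md3 : MD3 ({0} : Set (Fin 1 → F3)) := by
  intro c hc c' hc' hne
  rw [Set.mem_singleton_iff] at hc hc'
  exact absurd (hc.trans hc'.symm) hne

def idxEquiv (t : ℕ) : Idx t ≃ Fin (3 * t + 1) :=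
  ((Equiv.sumCongr (Equiv.refl (Fin t))
      ((Equiv.sumCongr (Equiv.refl (Fin t)) finSumFinEquiv).trans finSumFinEquiv)).trans
    finSumFinEquiv).trans (finCongr (by ring))

lemma pow3_ge (k : ℕ) : 2 * k + 1 ≤ 3 ^ k := by
  induction k with
  | zero => simp
  | succ k ih => rw [pow_succ]; omega

lemma rec_exists (k : ℕ) : ∃ C : Set (Fin ((3 ^ (k + 1) - 1) / 2) → F3),
    IsPerfectCode C ∧ MD3 C ∧ Nat.card C = 3 ^ ((3 ^ (k + 1) - 1) / 2 - (k + 1)) := by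
  induction k with
  | zero =>
    have h1 : (3 ^ (0 + 1) - 1) / 2 = 1 := by norm_num
    refine ⟨(fun x => x ∘ (finCongr h1)) '' {0}, perfect_comp _ base_perfect,
      md3_comp _ base_md3, ?_⟩
    rw [Nat.card_image_of_injective (comp_inj _), h1]
    simp
  | succ k ih =>
    obtain ⟨C, hp, hmd, hcard⟩ := ih
    have htk : k + 1 ≤ (3 ^ (k + 1) - 1) / 2 := by
      have := pow3_ge (k + 1); omega
    obtain ⟨j, hj⟩ := (Odd.pow (⟨1, by norm_num⟩ : Odd 3) : Odd (3 ^ (k + 1)))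
    have h3 : (3:ℕ) ^ (k + 1 + 1) = 3 * 3 ^ (k + 1) := by ring
    have hn' : (3 ^ (k + 1 + 1) - 1) / 2 = 3 * ((3 ^ (k + 1) - 1) / 2) + 1 := by omega
    have hl : ∀ (c : Fin ((3 ^ (k + 1) - 1) / 2) → F3) (i : Fin ((3 ^ (k + 1) - 1) / 2)),
        (fun (_ : Fin ((3 ^ (k + 1) - 1) / 2) → F3) (_ : Fin ((3 ^ (k + 1) - 1) / 2)) =>
          (1:F3)) c i ≠ 0 := fun _ _ => one_ne_zero
    have hVp := vas_perfect hp hmd (fun _ => 0) hl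
    have hVmd := vas_md3 (f := fun _ => 0) hmd hl
    have hVcard := vas_card (C := C) (fun _ => 0) (fun _ _ => 1)
    let e : Fin ((3 ^ (k + 1 + 1) - 1) / 2) ≃ Idx ((3 ^ (k + 1) - 1) / 2) :=
      (finCongr hn').trans (idxEquiv _).symm
    refine ⟨(fun x => x ∘ e) '' _, perfect_comp e hVp, md3_comp e hVmd, ?_⟩
    rw [Nat.card_image_of_injective (comp_inj e), hVcard, hcard]
    have hexp : (3 ^ (k + 1 + 1) - 1) / 2 - (k + 1 + 1) =
        (3 ^ (k + 1) - 1) / 2 + ((3 ^ (k + 1) - 1) / 2 + ((3 ^ (k + 1) - 1) / 2 - (k + 1))) := by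
      omega
    rw [hexp]; ring

/-- For `n = (3^m - 1)/2` and `t = (n-1)/3 = (3^(m-1)-1)/2`, the number of perfect
ternary codes of length `n` is at least `(3·2^t) ^ (3^(t-m+1))`. -/
theorem stmt_15 {m n t : ℕ} (hm : 2 ≤ m)
    (hn : n = (3 ^ m - 1) / 2)
    (ht : t = (n - 1) / 3) (ht' : t = (3 ^ (m - 1) - 1) / 2) :
    (3 * 2 ^ t) ^ 3 ^ (t + 1 - m) ≤
      Nat.card {C : Set (Fin n → ZMod 3) // IsPerfectCode C} := by
  classical
  have R := rec_exists (m - 2)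
  rw [show m - 2 + 1 = m - 1 by omega, ← ht'] at R
  obtain ⟨C, hp, hmd, hcard⟩ := R
  -- arithmetic: `n = 3 * t + 1`
  obtain ⟨j, hj⟩ := (Odd.pow (⟨1, by norm_num⟩ : Odd 3) : Odd (3 ^ (m - 1)))
  have h3 : (3:ℕ) ^ m = 3 * 3 ^ (m - 1) := by
    conv_lhs => rw [show m = (m - 1) + 1 by omega]
    ring
  have htm : m - 1 ≤ t := by
    have := pow3_ge (m - 1); omega
  have hn3 : n = 3 * t + 1 := by omega
  -- the reindexing equivalence
  let e : Fin n ≃ Idx t := (finCongr hn3).trans (idxEquiv t).symm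
  -- extensions of parameter functions
  let fext : (↥C → F3 × (Fin t → {a : F3 // a ≠ 0})) → ((Fin t → F3) → F3) :=
    fun g c => if h : c ∈ C then (g ⟨c, h⟩).1 else 0
  let lext : (↥C → F3 × (Fin t → {a : F3 // a ≠ 0})) → ((Fin t → F3) → (Fin t → F3)) :=
    fun g c i => if h : c ∈ C then ((g ⟨c, h⟩).2 i : F3) else 1
  have hlext : ∀ g c i, lext g c i ≠ 0 := by
    intro g c i
    simp only [lext]
    split
    · exact ((g ⟨c, _⟩).2 i).2
    · exact one_ne_zero
  -- the injection into the set of perfect codes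
  let Φ : (↥C → F3 × (Fin t → {a : F3 // a ≠ 0})) →
      {D : Set (Fin n → ZMod 3) // IsPerfectCode D} :=
    fun g => ⟨(fun x => x ∘ e) '' vas C (fext g) (lext g),
      perfect_comp e (vas_perfect hp hmd (fext g) (hlext g))⟩
  have hΦ : Function.Injective Φ := by
    intro g g' hgg
    have hset : vas C (fext g) (lext g) = vas C (fext g') (lext g') :=
      Set.image_injective.2 (comp_inj e) (Subtype.ext_iff.1 hgg)
    funext c
    obtain ⟨hf, hlam⟩ := vas_params_inj hset c.2
    simp only [fext, lext, dif_pos c.2, Subtype.coe_eta] at hf hlam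
    refine Prod.ext hf ?_
    funext i
    exact Subtype.ext (hlam i)
  have hle := Nat.card_le_card_of_injective Φ hΦ
  rw [Nat.card_fun, Nat.card_prod, Nat.card_fun, hcard] at hle
  have h2 : Nat.card {a : F3 // a ≠ 0} = 2 := by
    rw [Nat.card_eq_fintype_card]
    rfl
  rw [h2, Nat.card_eq_fintype_card (α := F3)] at hle
  have hF3 : Fintype.card F3 = 3 := rfl
  rw [hF3, Nat.card_eq_fintype_card (α := Fin t), Fintype.card_fin] at hle
  have hexp : t - (m - 1) = t + 1 - m := by omega
  rw [hexp] at hle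
  exact hle
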